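/- arXiv:1102.4951 — 4 statements merged into one kernel-verified Lean document; each statement's English description precedes it below -/
import Mathlib

section
/- Let k, m, c be integers with 1 ≤ ⌊k/2⌋ ≤ c < k−1 and c ≤ m, and set n = (k−c−1)·A(m, 2(k−c−1), c). Then there exists a c-uniform (n, cn, k, m)-CBC; concretely, the collection consisting of k−c−1 copies of each member of a maximum family of c-subsets of an m-set with pairwise symmetric differences of cardinality at least 2(k−c−1) satisfies the restricted Hall condition HC1[k]. -/
/-- `maxCW m d w` = `A(m, d, w)`: maximum size of a family of distinct `w`-subsets of an
`m`-set with pairwise symmetric differences of cardinality at least `d`. -/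
noncomputable def maxCW (m d w : ℕ) : ℕ :=
  sSup {s : ℕ | ∃ F : Finset (Finset (Fin m)), F.card = s ∧
    (∀ C ∈ F, C.card = w) ∧
    ∀ C ∈ F, ∀ D ∈ F, C ≠ D → d ≤ (symmDiff C D).card}

/-- Construction of `c`-uniform CBCs for `1 ≤ ⌊k/2⌋ ≤ c < k-1`, `c ≤ m`, and
`n = (k-c-1)·A(m, 2(k-c-1), c)`: there is a `c`-uniform (n, cn, k, m)-CBC, obtained
concretely by taking `k-c-1` copies of each member of a maximum family of `c`-subsets
of an `m`-set with pairwise symmetric differences of cardinality at least `2(k-c-1)`. -/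
theorem uniform_cbc_construction (k m c n : ℕ)
    (h1 : 1 ≤ k / 2) (h2 : k / 2 ≤ c) (h3 : c < k - 1) (h4 : c ≤ m)
    (hn : n = (k - c - 1) * maxCW m (2 * (k - c - 1)) c) :
    ∃ X : Fin n → Finset (Fin m),
      (∀ t, (X t).card = c) ∧
      (∀ J : Finset (Fin n), 1 ≤ J.card → J.card ≤ k →
          J.card ≤ (J.biUnion X).card) ∧
      ∃ F : Finset (Finset (Fin m)),
        F.card = maxCW m (2 * (k - c - 1)) c ∧
        (∀ C ∈ F, C.card = c) ∧
        (∀ C ∈ F, ∀ D ∈ F, C ≠ D → 2 * (k - c - 1) ≤ (symmDiff C D).card) ∧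
        (∀ t, X t ∈ F) ∧
        (∀ C ∈ F, (Finset.univ.filter (fun t => X t = C)).card = k - c - 1) := by
  classical
  set r := k - c - 1 with hrdef
  have hk : k = c + r + 1 := by omega
  have hr1 : 1 ≤ r := by omega
  have hrc : r ≤ c := by omega
  -- obtain an achieving family F
  have hmem : maxCW m (2 * r) c ∈ {s : ℕ | ∃ F : Finset (Finset (Fin m)), F.card = s ∧
      (∀ C ∈ F, C.card = c) ∧
      ∀ C ∈ F, ∀ D ∈ F, C ≠ D → 2 * r ≤ (symmDiff C D).card} := by
    apply Nat.sSup_mem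
    · exact ⟨0, ∅, by simp⟩
    · refine ⟨2 ^ m, ?_⟩
      rintro s ⟨F, hF, -⟩
      subst hF
      calc F.card ≤ Finset.univ.card := Finset.card_le_univ F
        _ = 2 ^ m := by simp [Finset.card_univ, Fintype.card_finset]
  obtain ⟨F, hFcard, hFc, hFd⟩ := hmem
  -- key consequence of the distance condition
  have hdist : ∀ C ∈ F, ∀ D ∈ F, C ≠ D → r ≤ (D \ C).card := by
    intro C hC D hD hne
    have h2r := hFd C hC D hD hne
    have hs : (symmDiff C D).card = (C \ D).card + (D \ C).card := by
      rw [show symmDiff C D = (C \ D) ∪ (D \ C) from rfl]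
      exact Finset.card_union_of_disjoint disjoint_sdiff_sdiff
    have e1 : (C \ D).card + (C ∩ D).card = c := by
      rw [Finset.card_sdiff_add_card_inter]; exact hFc C hC
    have e2 : (D \ C).card + (D ∩ C).card = c := by
      rw [Finset.card_sdiff_add_card_inter]; exact hFc D hD
    have e3 : (C ∩ D).card = (D ∩ C).card := by rw [Finset.inter_comm]
    omega
  -- set up the replication map
  have hn' : n = r * F.card := by rw [hn, hFcard]
  let e : Fin n ≃ Fin r × Fin F.card := (finCongr hn').trans finProdFinEquiv.symm
  let g : Fin F.card → Finset (Fin m) := fun i => ((F.equivFin.symm i : F) : Finset (Fin m))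
  have hgF : ∀ i, g i ∈ F := fun i => (F.equivFin.symm i).2
  have hginj : Function.Injective g := fun i j h => by
    apply F.equivFin.symm.injective
    exact Subtype.ext h
  set X : Fin n → Finset (Fin m) := fun t => g (e t).2 with hXdef
  have hXF : ∀ t, X t ∈ F := fun t => hgF _
  -- fiber counts
  have hfib : ∀ C ∈ F, (Finset.univ.filter (fun t => X t = C)).card = r := by
    intro C hC
    obtain ⟨i, hi⟩ : ∃ i, g i = C :=
      ⟨F.equivFin ⟨C, hC⟩, by simp [g]⟩
    have h1 : (Finset.univ.filter (fun t => X t = C)).card =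
        (Finset.univ.filter (fun p : Fin r × Fin F.card => p.2 = i)).card := by
      apply Finset.card_equiv e
      intro t
      simp only [Finset.mem_filter, Finset.mem_univ, true_and, hXdef, ← hi]
      exact ⟨fun h => hginj h, fun h => by rw [h]⟩
    have h2 : (Finset.univ.filter (fun p : Fin r × Fin F.card => p.2 = i)) =
        Finset.univ ×ˢ {i} := by
      ext p
      simp only [Finset.mem_filter, Finset.mem_univ, true_and, Finset.mem_product,
        Finset.mem_singleton]
    rw [h1, h2, Finset.card_product]
    simp
  refine ⟨X, fun t => hFc _ (hXF t), ?_, F, hFcard, hFc, hFd, hXF, hfib⟩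
  -- Hall condition
  intro J hJ1 hJk
  set P := J.image X with hPdef
  have hPF : ∀ C ∈ P, C ∈ F := by
    intro C hC
    obtain ⟨t, -, ht⟩ := Finset.mem_image.mp hC
    rw [← ht]; exact hXF t
  set U := J.biUnion X with hUdef
  have hUP : U = P.biUnion id := by
    rw [hPdef, Finset.image_biUnion]
    rfl
  -- each fiber within J has size at most r
  have hJle : J.card ≤ P.card * r := by
    have hcount : J.card = ∑ C ∈ P, (J.filter (fun t => X t = C)).card :=
      Finset.card_eq_sum_card_fiberwise (fun t ht => Finset.mem_image_of_mem X ht)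
    have hbound : ∀ C ∈ P, (J.filter (fun t => X t = C)).card ≤ r := by
      intro C hC
      rw [← hfib C (hPF C hC)]
      exact Finset.card_le_card (Finset.filter_subset_filter _ (Finset.subset_univ J))
    calc J.card = ∑ C ∈ P, (J.filter (fun t => X t = C)).card := hcount
      _ ≤ P.card • r := Finset.sum_le_card_nsmul _ _ _ hbound
      _ = P.card * r := by rw [smul_eq_mul]
  have hP1 : 1 ≤ P.card := by
    obtain ⟨t, ht⟩ := Finset.card_pos.mp hJ1
    exact Finset.card_pos.mpr ⟨X t, Finset.mem_image_of_mem X ht⟩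
  have hsubU : ∀ C ∈ P, C ⊆ U := by
    intro C hC
    rw [hUP]
    exact Finset.subset_biUnion_of_mem id hC
  by_cases hbig : k ≤ U.card
  · exact hJk.trans hbig
  · -- small union case : U.card ≤ c + r
    push_neg at hbig
    have hUcr : U.card ≤ c + r := by omega
    by_cases hP2 : P.card = 1
    · -- single set
      obtain ⟨C, hc⟩ := Finset.card_eq_one.mp hP2
      have hCF : C ∈ F := hPF C (by simp [hc])
      have hUC : U = C := by rw [hUP, hc]; simp
      calc J.card ≤ P.card * r := hJle
        _ = r := by rw [hP2, one_mul]
        _ ≤ c := hrc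
        _ = U.card := by rw [hUC, hFc C hCF]
    · have hP2' : 2 ≤ P.card := by omega
      -- each complement U \ C equals C' \ C for any other C' ∈ P
      have hcompl : ∀ C ∈ P, ∀ C' ∈ P, C' ≠ C → U \ C = C' \ C := by
        intro C hC C' hC' hne
        have hsub : C' \ C ⊆ U \ C := Finset.sdiff_subset_sdiff (hsubU C' hC') (le_refl C)
        have hcard1 : (U \ C).card = U.card - c := by
          rw [Finset.card_sdiff_of_subset (hsubU C hC), hFc C (hPF C hC)]
        have hcard2 : r ≤ (C' \ C).card := hdist C (hPF C hC) C' (hPF C' hC') (Ne.symm hne)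
        have : (U \ C).card ≤ (C' \ C).card := by omega
        exact (Finset.eq_of_subset_of_card_le hsub this).symm
      have hrle : ∀ C ∈ P, r ≤ (U \ C).card := by
        intro C hC
        obtain ⟨C', hC', hne⟩ := Finset.exists_mem_ne hP2' C
        rw [hcompl C hC C' hC' hne]
        exact hdist C (hPF C hC) C' (hPF C' hC') (Ne.symm hne)
      have hdisj : ∀ C ∈ P, ∀ C' ∈ P, C ≠ C' → Disjoint (U \ C) (U \ C') := by
        intro C hC C' hC' hne
        have h1 : U \ C ⊆ C' := by
          rw [hcompl C hC C' hC' (Ne.symm hne)]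
          exact Finset.sdiff_subset
        exact Finset.disjoint_of_subset_left h1 (Finset.sdiff_disjoint).symm
      have hsum : P.card * r ≤ U.card := by
        calc P.card * r = P.card • r := by rw [smul_eq_mul]
          _ ≤ ∑ C ∈ P, (U \ C).card := Finset.card_nsmul_le_sum _ _ _ hrle
          _ = (P.biUnion (fun C => U \ C)).card := (Finset.card_biUnion hdisj).symm
          _ ≤ U.card := Finset.card_le_card (Finset.biUnion_subset.mpr
                (fun C _ => Finset.sdiff_subset))
      exact hJle.trans hsum
end

section
/- Let k and n be integers with 1 ≤ k ≤ n. Then N(n, k, k) = kn − k(k−1), i.e. the minimum total storage of an (n, N, k, k)-combinatorial batch code equals kn − k(k−1). -/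
/-- `Nmin n k m`: minimum total storage over all (n,N,k,m)-combinatorial batch codes. -/
noncomputable def Nmin (n k m : ℕ) : ℕ :=
  sInf {N : ℕ | ∃ X : Fin n → Finset (Fin m),
    (∑ t, (X t).card) = N ∧
    ∀ J : Finset (Fin n), 1 ≤ J.card → J.card ≤ k → J.card ≤ (J.biUnion X).card}

/-- For `1 ≤ k ≤ n`, the minimum total storage of an (n, N, k, k)-CBC is
`N(n,k,k) = kn - k(k-1)`. -/
theorem Nmin_m_eq_k (n k : ℕ) (hk : 1 ≤ k) (hkn : k ≤ n) :
    Nmin n k k = k * n - k * (k - 1) := by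
  have hmem : (k * n - k * (k - 1)) ∈ {N : ℕ | ∃ X : Fin n → Finset (Fin k),
      (∑ t, (X t).card) = N ∧
      ∀ J : Finset (Fin n), 1 ≤ J.card → J.card ≤ k → J.card ≤ (J.biUnion X).card} := by
    refine ⟨fun t => if h : t.val < k then {(⟨t.val, h⟩ : Fin k)} else Finset.univ, ?_, ?_⟩
    · have hcard : ∀ t : Fin n,
          (if h : t.val < k then {(⟨t.val, h⟩ : Fin k)} else (Finset.univ : Finset (Fin k))).card
            = if t.val < k then 1 else k := by
        intro t; split <;> simp
      simp_rw [hcard]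
      rw [Finset.sum_ite]
      simp only [Finset.sum_const, smul_eq_mul]
      have hA : (Finset.univ.filter (fun t : Fin n => t.val < k)).card = k := by
        have himg : Finset.univ.filter (fun t : Fin n => t.val < k)
            = Finset.image (Fin.castLE hkn) Finset.univ := by
          ext t
          simp only [Finset.mem_filter, Finset.mem_univ, true_and, Finset.mem_image]
          constructor
          · intro ht; exact ⟨⟨t.val, ht⟩, rfl⟩
          · rintro ⟨s, -, rfl⟩; exact s.isLt
        rw [himg, Finset.card_image_of_injective _ (Fin.castLE_injective hkn)]
        simp
      have hB : (Finset.univ.filter (fun t : Fin n => ¬ t.val < k)).card = n - k := by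
        have := Finset.card_filter_add_card_filter_not
          (s := (Finset.univ : Finset (Fin n))) (p := fun t : Fin n => t.val < k)
        simp only [Finset.card_univ, Fintype.card_fin] at this
        omega
      rw [hA, hB]
      have e1 : (n - k) * k + k * k = n * k := by
        rw [← Nat.add_mul, Nat.sub_add_cancel hkn]
      have e2 : k * (k - 1) + k = k * k := by
        obtain ⟨m, rfl⟩ : ∃ m, k = m + 1 := ⟨k - 1, by omega⟩
        simp [Nat.succ_sub_one]
        ring
      have e3 : k * n = n * k := Nat.mul_comm _ _
      omega
    · intro J hJ1 hJk
      by_cases hall : ∀ t ∈ J, t.val < k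
      · refine Finset.card_le_card_of_injOn
          (fun t => (⟨t.val % k, Nat.mod_lt _ hk⟩ : Fin k)) ?_ ?_
        · intro t ht
          refine Finset.mem_biUnion.mpr ⟨t, ht, ?_⟩
          have h := hall t ht
          rw [dif_pos h]
          simp [Fin.ext_iff, Nat.mod_eq_of_lt h]
        · intro t ht t' ht' heq
          have h := hall t ht
          have h' := hall t' ht'
          have : t.val % k = t'.val % k := congrArg Fin.val heq
          rw [Nat.mod_eq_of_lt h, Nat.mod_eq_of_lt h'] at this
          exact Fin.ext this
      · push_neg at hall
        obtain ⟨t, ht, htk⟩ := hall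
        have hsub : (Finset.univ : Finset (Fin k)) ⊆ J.biUnion
            (fun t => if h : t.val < k then {(⟨t.val, h⟩ : Fin k)} else Finset.univ) := by
          have : (if h : t.val < k then {(⟨t.val, h⟩ : Fin k)} else (Finset.univ : Finset (Fin k)))
              = Finset.univ := dif_neg (Nat.not_lt.mpr htk)
          calc (Finset.univ : Finset (Fin k))
              = (if h : t.val < k then {(⟨t.val, h⟩ : Fin k)} else Finset.univ) := this.symm
            _ ⊆ _ := Finset.subset_biUnion_of_mem
                (fun t : Fin n => if h : t.val < k then {(⟨t.val, h⟩ : Fin k)} else Finset.univ) ht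
        have := Finset.card_le_card hsub
        simp only [Finset.card_univ, Fintype.card_fin] at this
        omega
  refine le_antisymm (Nat.sInf_le hmem) ?_
  obtain ⟨X, hsum, hhall⟩ := Nat.sInf_mem (Set.nonempty_of_mem hmem)
  unfold Nmin
  rw [← hsum]
  clear hsum hmem
  -- double counting
  have key : ∀ s : Fin k, n - (k - 1) ≤ (Finset.univ.filter (fun t => s ∈ X t)).card := by
    intro s
    by_contra hcon
    push_neg at hcon
    have hsplit := Finset.card_filter_add_card_filter_not
      (s := (Finset.univ : Finset (Fin n))) (p := fun t : Fin n => s ∈ X t)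
    simp only [Finset.card_univ, Fintype.card_fin] at hsplit
    have hbig : k ≤ (Finset.univ.filter (fun t : Fin n => ¬ s ∈ X t)).card := by omega
    obtain ⟨J, hJsub, hJcard⟩ := Finset.exists_subset_card_eq hbig
    have h1 := hhall J (by omega) (by omega)
    have h2 : J.biUnion X ⊆ Finset.univ.erase s := by
      intro x hx
      rw [Finset.mem_biUnion] at hx
      obtain ⟨u, huJ, hxu⟩ := hx
      have hu := hJsub huJ
      simp only [Finset.mem_filter, Finset.mem_univ, true_and] at hu
      refine Finset.mem_erase.mpr ⟨?_, Finset.mem_univ _⟩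
      rintro rfl; exact hu hxu
    have h3 := Finset.card_le_card h2
    rw [Finset.card_erase_of_mem (Finset.mem_univ s)] at h3
    simp only [Finset.card_univ, Fintype.card_fin] at h3
    omega
  have hdc : ∑ t, (X t).card = ∑ s : Fin k, (Finset.univ.filter (fun t => s ∈ X t)).card := by
    simp_rw [Finset.card_filter]
    rw [Finset.sum_comm]
    refine Finset.sum_congr rfl (fun t _ => ?_)
    rw [← Finset.card_filter]
    congr 1
    ext s
    simp
  have hlow : k * (n - (k - 1)) ≤ ∑ t, (X t).card := by
    rw [hdc]
    calc k * (n - (k - 1)) = ∑ _s : Fin k, (n - (k - 1)) := by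
          simp [Finset.sum_const, Nat.mul_comm]
      _ ≤ _ := Finset.sum_le_sum (fun s _ => key s)
  have e4 : k * n = k * (n - (k - 1)) + k * (k - 1) := by
    rw [← Nat.mul_add, Nat.sub_add_cancel (by omega)]
  omega
end

section
/- Let k and m be integers with 2 ≤ k ≤ m. Then N(m+1, k, m) = m + k, i.e. the minimum total storage of an (m+1, N, k, m)-combinatorial batch code equals m + k. -/
section Aux

variable {k m : ℕ}

/-- Construction: singletons plus one block of size `k`. -/
lemma cbc_construction (hk : 2 ≤ k) (hkm : k ≤ m) :
    ∃ X : Fin (m + 1) → Finset (Fin m),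
      (∑ t, (X t).card) = m + k ∧
      ∀ J : Finset (Fin (m + 1)), 1 ≤ J.card → J.card ≤ k →
        J.card ≤ (J.biUnion X).card := by
  have hA : ∀ x ∈ Finset.range k, x < m := fun x hx =>
    lt_of_lt_of_le (Finset.mem_range.mp hx) hkm
  set A : Finset (Fin m) := (Finset.range k).attachFin hA with hAdef
  have hAcard : A.card = k := by
    rw [hAdef, Finset.card_attachFin, Finset.card_range]
  refine ⟨fun i => if h : (i : ℕ) < m then {⟨i, h⟩} else A, ?_, ?_⟩
  · rw [Fin.sum_univ_castSucc]
    have h1 : ∀ i : Fin m, ((if h : ((Fin.castSucc i : Fin (m+1)) : ℕ) < m then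
        ({⟨(Fin.castSucc i : Fin (m+1)), h⟩} : Finset (Fin m)) else A)).card = 1 := by
      intro i
      rw [dif_pos (by simpa using i.isLt)]
      exact Finset.card_singleton _
    have h2 : ((if h : ((Fin.last m : Fin (m+1)) : ℕ) < m then
        ({⟨(Fin.last m : Fin (m+1)), h⟩} : Finset (Fin m)) else A)).card = k := by
      rw [dif_neg (by simp)]
      exact hAcard
    simp only [h1, h2, Finset.sum_const, Finset.card_univ, Fintype.card_fin, smul_eq_mul, mul_one]
  · intro J hJ1 hJk
    by_cases hL : ∃ t ∈ J, ¬ ((t : ℕ) < m)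
    · obtain ⟨t, htJ, htm⟩ := hL
      have hXt : (if h : (t : ℕ) < m then ({⟨t, h⟩} : Finset (Fin m)) else A) = A :=
        dif_neg htm
      have hsub : A ⊆ J.biUnion (fun i => if h : (i : ℕ) < m then {⟨i, h⟩} else A) := by
        intro x hx
        exact Finset.mem_biUnion.mpr ⟨t, htJ, by rw [hXt] ; exact hx⟩
      calc J.card ≤ k := hJk
        _ = A.card := hAcard.symm
        _ ≤ _ := Finset.card_le_card hsub
    · push_neg at hL
      have hm1 : 0 < m := by omega
      refine Finset.card_le_card_of_injOn
        (fun i => if h : (i : ℕ) < m then (⟨i, h⟩ : Fin m) else ⟨0, hm1⟩) ?_ ?_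
      · intro i hi
        have h := hL i hi
        simp only [dif_pos h]
        refine Finset.mem_biUnion.mpr ⟨i, hi, ?_⟩
        rw [dif_pos h]
        exact Finset.mem_singleton_self _
      · intro i hi j hj hij
        have hi' := hL i hi
        have hj' := hL j hj
        simp only [dif_pos hi', dif_pos hj', Fin.mk.injEq] at hij
        exact Fin.ext hij

/-- Lower bound: every `(m+1, N, k, m)`-CBC has `N ≥ m + k`. -/
lemma cbc_lower_bound (hk : 2 ≤ k) (hkm : k ≤ m) (N : ℕ)
    (X : Fin (m + 1) → Finset (Fin m))
    (hsum : (∑ t, (X t).card) = N)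
    (hall : ∀ J : Finset (Fin (m + 1)), 1 ≤ J.card → J.card ≤ k →
      J.card ≤ (J.biUnion X).card) :
    m + k ≤ N := by
  classical
  -- the set of cardinalities of deficient index sets
  set S : Set ℕ := {c | ∃ J : Finset (Fin (m + 1)),
      (J.biUnion X).card < J.card ∧ J.card = c} with hSdef
  have hSne : S.Nonempty := by
    refine ⟨(Finset.univ : Finset (Fin (m + 1))).card, Finset.univ, ?_, rfl⟩
    have h1 : ((Finset.univ : Finset (Fin (m+1))).biUnion X).card ≤ m := by
      calc _ ≤ (Finset.univ : Finset (Fin m)).card := Finset.card_le_card (Finset.subset_univ _)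
        _ = m := by simp
    have h2 : (Finset.univ : Finset (Fin (m + 1))).card = m + 1 := by simp
    omega
  obtain ⟨J, hJdef, hJcard⟩ := Nat.sInf_mem hSne
  -- minimality
  have hmin : ∀ J' : Finset (Fin (m + 1)), J'.card < J.card →
      J'.card ≤ (J'.biUnion X).card := by
    intro J' hlt
    by_contra h
    push_neg at h
    have : sInf S ≤ J'.card := Nat.sInf_le ⟨J', h, rfl⟩
    omega
  set j := J.card with hj
  have hj1 : 1 ≤ j := by
    rcases Nat.eq_zero_or_pos j with h | h
    · omega
    · exact h
  have hjk : k + 1 ≤ j := by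
    by_contra h
    push_neg at h
    have := hall J hj1 (by omega)
    omega
  set u := J.biUnion X with hu
  have hum : u.card = j - 1 := by
    have hle : u.card ≤ j - 1 := by omega
    obtain ⟨i, hi⟩ := Finset.card_pos.mp (by omega : 0 < J.card)
    have herase : (J.erase i).card = j - 1 := by rw [Finset.card_erase_of_mem hi]
    have h1 : (J.erase i).card ≤ ((J.erase i).biUnion X).card :=
      hmin _ (by omega)
    have h2 : ((J.erase i).biUnion X).card ≤ u.card :=
      Finset.card_le_card (Finset.biUnion_subset_biUnion_of_subset_left _ (Finset.erase_subset _ _))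
    omega
  -- every element of u is covered at least twice
  have htwice : ∀ x ∈ u, 2 ≤ (J.filter (fun i => x ∈ X i)).card := by
    intro x hx
    obtain ⟨i, hiJ, hix⟩ := Finset.mem_biUnion.mp hx
    have h1 : i ∈ J.filter (fun i => x ∈ X i) := Finset.mem_filter.mpr ⟨hiJ, hix⟩
    by_contra h
    push_neg at h
    have hfle : (J.filter (fun i => x ∈ X i)).card = 1 := by
      have := Finset.card_pos.mpr ⟨i, h1⟩
      omega
    have hsub : (J.erase i).biUnion X ⊆ u.erase x := by
      intro y hy
      obtain ⟨i', hi', hyi'⟩ := Finset.mem_biUnion.mp hy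
      have hi'J : i' ∈ J := Finset.mem_of_mem_erase hi'
      have hi'ne : i' ≠ i := Finset.ne_of_mem_erase hi'
      refine Finset.mem_erase.mpr ⟨?_, Finset.mem_biUnion.mpr ⟨i', hi'J, hyi'⟩⟩
      intro hyx
      subst hyx
      have : i' ∈ J.filter (fun i => y ∈ X i) := Finset.mem_filter.mpr ⟨hi'J, hyi'⟩
      have := Finset.card_le_card (Finset.insert_subset this (Finset.singleton_subset_iff.mpr h1))
      rw [Finset.card_insert_of_notMem (by simpa using hi'ne)] at this
      simp [hfle] at this
    have herase : (J.erase i).card = j - 1 := by rw [Finset.card_erase_of_mem hiJ]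
    have h2 : (J.erase i).card ≤ ((J.erase i).biUnion X).card := hmin _ (by omega)
    have h3 : ((J.erase i).biUnion X).card ≤ (u.erase x).card := Finset.card_le_card hsub
    have h4 : (u.erase x).card = u.card - 1 := Finset.card_erase_of_mem hx
    omega
  -- double counting inside J
  have hXsub : ∀ i ∈ J, X i ⊆ u := fun i hi => Finset.subset_biUnion_of_mem X hi
  have hdouble : ∑ i ∈ J, (X i).card = ∑ x ∈ u, (J.filter (fun i => x ∈ X i)).card := by
    have h1 : ∀ i ∈ J, (X i).card = ∑ x ∈ u, (if x ∈ X i then 1 else 0) := by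
      intro i hi
      rw [← Finset.sum_filter]
      rw [Finset.filter_mem_eq_inter, Finset.inter_eq_right.mpr (hXsub i hi)]
      simp
    rw [Finset.sum_congr rfl h1, Finset.sum_comm]
    refine Finset.sum_congr rfl fun x _ => ?_
    rw [← Finset.sum_filter]
    simp
  have hinJ : 2 * (j - 1) ≤ ∑ i ∈ J, (X i).card := by
    rw [hdouble]
    calc 2 * (j - 1) = ∑ _x ∈ u, 2 := by
          rw [Finset.sum_const, smul_eq_mul, hum] ; ring
      _ ≤ _ := Finset.sum_le_sum htwice
  -- outside J each set is nonempty
  have houtJ : Jᶜ.card ≤ ∑ i ∈ Jᶜ, (X i).card := by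
    calc Jᶜ.card = ∑ _i ∈ Jᶜ, 1 := by rw [Finset.sum_const, smul_eq_mul, mul_one]
      _ ≤ _ := by
          refine Finset.sum_le_sum fun i _ => ?_
          have := hall {i} (by simp) (by simp ; omega)
          simpa using this
  have hcompl : Jᶜ.card = m + 1 - j := by
    rw [Finset.card_compl]
    simp [hj]
  have hsplit : ∑ i ∈ J, (X i).card + ∑ i ∈ Jᶜ, (X i).card = N := by
    rw [Finset.sum_add_sum_compl, hsum]
  have hjm : j ≤ m + 1 := by
    calc j = J.card := hj
      _ ≤ (Finset.univ : Finset (Fin (m+1))).card := Finset.card_le_univ _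
      _ = m + 1 := by simp
  omega

end Aux

/-- For `2 ≤ k ≤ m`, the minimum total storage of an (m+1, N, k, m)-CBC is
`N(m+1,k,m) = m + k`. -/
theorem Nmin_n_eq_m_succ (k m : ℕ) (hk : 2 ≤ k) (hkm : k ≤ m) :
    Nmin (m + 1) k m = m + k := by
  have hmem : (m + k) ∈ {N : ℕ | ∃ X : Fin (m+1) → Finset (Fin m),
      (∑ t, (X t).card) = N ∧
      ∀ J : Finset (Fin (m+1)), 1 ≤ J.card → J.card ≤ k → J.card ≤ (J.biUnion X).card} := by
    obtain ⟨X, h1, h2⟩ := cbc_construction hk hkm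
    exact ⟨X, h1, h2⟩
  refine le_antisymm (Nat.sInf_le hmem) ?_
  have hne : {N : ℕ | ∃ X : Fin (m+1) → Finset (Fin m),
      (∑ t, (X t).card) = N ∧
      ∀ J : Finset (Fin (m+1)), 1 ≤ J.card → J.card ≤ k →
        J.card ≤ (J.biUnion X).card}.Nonempty := ⟨m + k, hmem⟩
  obtain ⟨X, h1, h2⟩ := Nat.sInf_mem hne
  exact cbc_lower_bound hk hkm _ X h1 h2
end

section
/- Let m ≥ k ≥ 2 be integers and let n ≥ (k−1)·C(m, k−1). Then N(n, k, m) = kn − (k−1)·C(m, k−1). -/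
section Aux
open Finset

-- two distinct (k-1)-sets have union of size ≥ k
lemma two_sets_union {α : Type*} [DecidableEq α] {k : ℕ} (hk : 2 ≤ k)
    {T1 T2 : Finset α} (h1 : T1.card = k - 1) (h2 : T2.card = k - 1) (hne : T1 ≠ T2) :
    k ≤ (T1 ∪ T2).card := by
  have hiu : (T1 ∪ T2).card + (T1 ∩ T2).card = T1.card + T2.card :=
    Finset.card_union_add_card_inter T1 T2
  have hint : (T1 ∩ T2).card ≤ k - 2 := by
    by_contra h
    push_neg at h
    have hsub : T1 ∩ T2 ⊆ T1 := Finset.inter_subset_left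
    have hle : (T1 ∩ T2).card ≤ k - 1 := h1 ▸ Finset.card_le_card hsub
    have heq : T1 ∩ T2 = T1 := Finset.eq_of_subset_of_card_le hsub (by omega)
    have h12 : T1 ⊆ T2 := by rw [← heq]; exact Finset.inter_subset_right
    exact hne (Finset.eq_of_subset_of_card_le h12 (by omega))
  omega

lemma lower_bound (n k m : ℕ) (hk : 2 ≤ k) (hkm : k ≤ m)
    (X : Fin n → Finset (Fin m))
    (hH : ∀ J : Finset (Fin n), 1 ≤ J.card → J.card ≤ k → J.card ≤ (J.biUnion X).card) :
    k * n - (k - 1) * Nat.choose m (k - 1) ≤ ∑ t, (X t).card := by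
  classical
  set P : Finset (Finset (Fin m)) := Finset.powersetCard (k-1) Finset.univ with hP
  have hPcard : P.card = Nat.choose m (k-1) := by
    simp [hP, Finset.card_powersetCard]
  -- Step A: each (k-1)-set contains at most k-1 of the X i's
  have stepA : ∀ T ∈ P, (Finset.univ.filter fun i => X i ⊆ T).card ≤ k - 1 := by
    intro T hT
    rw [Finset.mem_powersetCard] at hT
    by_contra h
    push_neg at h
    have hk' : k ≤ (Finset.univ.filter fun i => X i ⊆ T).card := by omega
    obtain ⟨J, hJsub, hJcard⟩ := Finset.exists_subset_card_eq hk'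
    have := hH J (by omega) (by omega)
    have hUT : J.biUnion X ⊆ T := by
      intro x hx
      rw [Finset.mem_biUnion] at hx
      obtain ⟨j, hj, hxj⟩ := hx
      have := hJsub hj
      rw [Finset.mem_filter] at this
      exact this.2 hxj
    have := Finset.card_le_card hUT
    omega
  -- Step B: each i has deficiency ≤ number of (k-1)-sets containing X i
  have stepB : ∀ i, k - (X i).card ≤ (P.filter fun T => X i ⊆ T).card := by
    intro i
    by_cases hs : k ≤ (X i).card
    · simp [Nat.sub_eq_zero_of_le hs]
    · push_neg at hs
      set s := (X i).card with hsdef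
      have hs1 : s ≤ k - 1 := by omega
      have hcardeq : (P.filter fun T => X i ⊆ T).card
          = (Finset.powersetCard (k-1-s) (Finset.univ \ X i)).card := by
        apply Finset.card_bij' (fun T _ => T \ X i) (fun U _ => U ∪ X i)
        · intro T hT
          rw [Finset.mem_filter, hP, Finset.mem_powersetCard] at hT
          rw [Finset.mem_powersetCard]
          constructor
          · intro x hx
            rw [Finset.mem_sdiff] at hx ⊢
            exact ⟨Finset.mem_univ x, hx.2⟩
          · rw [Finset.card_sdiff_of_subset hT.2, hT.1.2]
        · intro U hU
          rw [Finset.mem_powersetCard] at hU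
          have hdisj : Disjoint U (X i) := by
            rw [Finset.disjoint_left]
            intro a ha hax
            have := hU.1 ha
            rw [Finset.mem_sdiff] at this
            exact this.2 hax
          rw [Finset.mem_filter, hP, Finset.mem_powersetCard]
          refine ⟨⟨Finset.subset_univ _, ?_⟩, Finset.subset_union_right⟩
          rw [Finset.card_union_of_disjoint hdisj, hU.2]
          omega
        · intro T hT
          rw [Finset.mem_filter] at hT
          exact Finset.sdiff_union_of_subset hT.2
        · intro U hU
          rw [Finset.mem_powersetCard] at hU
          have hdisj : Disjoint U (X i) := by
            rw [Finset.disjoint_left]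
            intro a ha hax
            have := hU.1 ha
            rw [Finset.mem_sdiff] at this
            exact this.2 hax
          rw [Finset.union_sdiff_right]
          exact Finset.sdiff_eq_self_of_disjoint hdisj
      rw [hcardeq, Finset.card_powersetCard, Finset.card_sdiff_of_subset (Finset.subset_univ _),
        Finset.card_univ, Fintype.card_fin]
      calc k - s ≤ (k - s).choose (k - 1 - s) := by
            have h1 : k - 1 - s = (k - s) - 1 := by omega
            rw [h1, Nat.choose_symm (show 1 ≤ k - s by omega), Nat.choose_one_right]
        _ ≤ (m - s).choose (k - 1 - s) := Nat.choose_le_choose _ (by omega)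
  -- Step C: double counting
  have stepC : ∑ i, (P.filter fun T => X i ⊆ T).card
      = ∑ T ∈ P, (Finset.univ.filter fun i => X i ⊆ T).card := by
    simp only [Finset.card_filter]
    exact Finset.sum_comm
  -- Step D: total deficiency bound
  have stepD : ∑ i, (k - (X i).card) ≤ (k - 1) * Nat.choose m (k - 1) := by
    calc ∑ i, (k - (X i).card) ≤ ∑ i, (P.filter fun T => X i ⊆ T).card :=
          Finset.sum_le_sum fun i _ => stepB i
      _ = ∑ T ∈ P, (Finset.univ.filter fun i => X i ⊆ T).card := stepC
      _ ≤ ∑ T ∈ P, (k - 1) := Finset.sum_le_sum stepA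
      _ = (k - 1) * Nat.choose m (k - 1) := by
          rw [Finset.sum_const, hPcard, smul_eq_mul, mul_comm]
  -- Step E: conclude
  have stepE : k * n ≤ (∑ t, (X t).card) + ∑ i, (k - (X i).card) := by
    calc k * n = ∑ _i : Fin n, k := by
          rw [Finset.sum_const, Finset.card_univ, Fintype.card_fin, smul_eq_mul, mul_comm]
      _ ≤ ∑ i, ((X i).card + (k - (X i).card)) :=
          Finset.sum_le_sum fun i _ => by omega
      _ = (∑ t, (X t).card) + ∑ i, (k - (X i).card) := Finset.sum_add_distrib
  omega

lemma exists_code (n k m : ℕ) (hk : 2 ≤ k) (hkm : k ≤ m)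
    (hn : (k - 1) * Nat.choose m (k - 1) ≤ n) :
    ∃ X : Fin n → Finset (Fin m),
      (∑ t, (X t).card) = k * n - (k - 1) * Nat.choose m (k - 1) ∧
      ∀ J : Finset (Fin n), 1 ≤ J.card → J.card ≤ k → J.card ≤ (J.biUnion X).card := by
  classical
  set c := Nat.choose m (k-1) with hc
  set r := (k-1) * c with hr
  have hk1 : 0 < k - 1 := by omega
  set l := (Finset.powersetCard (k-1) (Finset.univ : Finset (Fin m))).toList with hl
  have hllen : l.length = c := by
    simp [hl, Finset.length_toList, Finset.card_powersetCard, hc]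
  have hlnd : l.Nodup := Finset.nodup_toList _
  have hmeml : ∀ (j : Fin l.length), (l.get j).card = k - 1 := by
    intro j
    have h : l.get j ∈ l := List.get_mem l j
    exact (Finset.mem_powersetCard.mp (Finset.mem_toList.mp h)).2
  set K : Finset (Fin m) := Finset.univ.map (Fin.castLEEmb hkm) with hK
  have hKcard : K.card = k := by simp [hK]
  have hdiv : ∀ i : Fin n, i.val < r → i.val / (k-1) < l.length := by
    intro i h
    rw [hllen, Nat.div_lt_iff_lt_mul hk1]
    rw [hr] at h
    exact lt_of_lt_of_le h (le_of_eq (mul_comm _ _))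
  set X : Fin n → Finset (Fin m) :=
    fun i => if h : i.val < r then l.get ⟨i.val/(k-1), hdiv i h⟩ else K with hX
  have hXlt : ∀ (i : Fin n) (h : i.val < r), X i = l.get ⟨i.val/(k-1), hdiv i h⟩ := by
    intro i h; simp [hX, h]
  have hXge : ∀ (i : Fin n), ¬ (i.val < r) → X i = K := by
    intro i h; simp [hX, h]
  have hcard : ∀ i : Fin n, (X i).card = if i.val < r then k - 1 else k := by
    intro i
    by_cases h : i.val < r
    · rw [hXlt i h, if_pos h]; exact hmeml _
    · rw [hXge i h, if_neg h]; exact hKcard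
  refine ⟨X, ?_, ?_⟩
  · -- sum computation
    have hsum : ∑ t, (X t).card = ∑ t : Fin n, (if t.val < r then k - 1 else k) :=
      Finset.sum_congr rfl fun t _ => hcard t
    have himg : (Finset.univ.filter fun t : Fin n => t.val < r).image Fin.val
        = Finset.range r := by
      ext x
      simp only [Finset.mem_image, Finset.mem_filter, Finset.mem_univ, true_and,
        Finset.mem_range]
      constructor
      · rintro ⟨t, ht, rfl⟩; exact ht
      · intro hx; exact ⟨⟨x, by omega⟩, hx, rfl⟩
    have hfilter : (Finset.univ.filter fun t : Fin n => t.val < r).card = r := by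
      rw [← Finset.card_image_of_injective _ Fin.val_injective, himg, Finset.card_range]
    have hfilter2 : (Finset.univ.filter fun t : Fin n => ¬ t.val < r).card = n - r := by
      have h := Finset.card_filter_add_card_filter_not
        (s := (Finset.univ : Finset (Fin n))) (p := fun t : Fin n => t.val < r)
      rw [Finset.card_univ, Fintype.card_fin, hfilter] at h
      omega
    rw [hsum, Finset.sum_ite, Finset.sum_const, Finset.sum_const, hfilter, hfilter2,
      smul_eq_mul, smul_eq_mul]
    obtain ⟨a, ha⟩ : ∃ a, n = r + a := ⟨n - r, by omega⟩
    obtain ⟨k', rfl⟩ : ∃ k', k = k' + 1 := ⟨k - 1, by omega⟩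
    subst ha
    have h1 : k' + 1 - 1 = k' := by omega
    rw [h1]
    have h2 : (k'+1) * (r + a) = r * k' + (r + a - r) * (k'+1) + r := by
      have : r + a - r = a := by omega
      rw [this]; ring
    omega
  · -- Hall condition
    intro J hJ1 hJk
    by_cases hbig : ∃ j ∈ J, r ≤ j.val
    · obtain ⟨j, hj, hjr⟩ := hbig
      have hXj : X j = K := hXge j (by omega)
      have hsub : K ⊆ J.biUnion X := hXj ▸ Finset.subset_biUnion_of_mem X hj
      have := Finset.card_le_card hsub
      omega
    · push_neg at hbig
      by_cases hsame : ∀ j1 ∈ J, ∀ j2 ∈ J, j1.val / (k-1) = j2.val / (k-1)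
      · obtain ⟨j0, hj0⟩ := Finset.card_pos.mp (by omega : 0 < J.card)
        set q0 := j0.val / (k-1) with hq0
        have hJsub : J.image Fin.val ⊆ Finset.Ico (q0*(k-1)) (q0*(k-1) + (k-1)) := by
          intro x hx
          rw [Finset.mem_image] at hx
          obtain ⟨j, hjJ, rfl⟩ := hx
          have hq : j.val / (k-1) = q0 := hsame j hjJ j0 hj0
          rw [Finset.mem_Ico]
          constructor
          · rw [← hq]; exact Nat.div_mul_le_self _ _
          · have h2 : j.val < (j.val/(k-1) + 1) * (k-1) :=
              (Nat.div_lt_iff_lt_mul hk1).mp (Nat.lt_succ_self _)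
            rw [hq, Nat.succ_mul] at h2
            exact h2
        have hJcard : J.card ≤ k - 1 := by
          have h1 : (J.image Fin.val).card = J.card :=
            Finset.card_image_of_injective J Fin.val_injective
          have h2 := Finset.card_le_card hJsub
          rw [Nat.card_Ico] at h2
          omega
        have hXj0 : (X j0).card = k - 1 := by rw [hcard, if_pos (hbig j0 hj0)]
        have hsub : X j0 ⊆ J.biUnion X := Finset.subset_biUnion_of_mem X hj0
        have := Finset.card_le_card hsub
        omega
      · push_neg at hsame
        obtain ⟨j1, hj1, j2, hj2, hq⟩ := hsame
        have hX1 := hXlt j1 (hbig j1 hj1)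
        have hX2 := hXlt j2 (hbig j2 hj2)
        have hne : X j1 ≠ X j2 := by
          rw [hX1, hX2]
          intro h
          have := List.nodup_iff_injective_get.mp hlnd h
          rw [Fin.mk.injEq] at this
          exact hq this
        have hc1 : (X j1).card = k - 1 := by rw [hcard, if_pos (hbig j1 hj1)]
        have hc2 : (X j2).card = k - 1 := by rw [hcard, if_pos (hbig j2 hj2)]
        have hU : k ≤ ((X j1) ∪ (X j2)).card := two_sets_union hk hc1 hc2 hne
        have hsub : (X j1) ∪ (X j2) ⊆ J.biUnion X :=
          Finset.union_subset (Finset.subset_biUnion_of_mem X hj1)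
            (Finset.subset_biUnion_of_mem X hj2)
        have := Finset.card_le_card hsub
        omega

end Aux

/-- For `m ≥ k ≥ 2` and `n ≥ (k-1)·C(m, k-1)`, the minimum total storage is
`N(n,k,m) = kn - (k-1)·C(m, k-1)`. -/
theorem Nmin_large_n (n k m : ℕ) (hk : 2 ≤ k) (hkm : k ≤ m)
    (hn : (k - 1) * Nat.choose m (k - 1) ≤ n) :
    Nmin n k m = k * n - (k - 1) * Nat.choose m (k - 1) := by
  obtain ⟨X, hXsum, hXhall⟩ := exists_code n k m hk hkm hn
  have hmem : k * n - (k - 1) * Nat.choose m (k - 1) ∈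
      {N : ℕ | ∃ X : Fin n → Finset (Fin m),
        (∑ t, (X t).card) = N ∧
        ∀ J : Finset (Fin n), 1 ≤ J.card → J.card ≤ k → J.card ≤ (J.biUnion X).card} :=
    ⟨X, hXsum, hXhall⟩
  refine le_antisymm (Nat.sInf_le hmem) (le_csInf ⟨_, hmem⟩ ?_)
  rintro N ⟨X', hsum, hH⟩
  rw [← hsum]
  exact lower_bound n k m hk hkm X' hH
end
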